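/- For a homeomorphism f of a compact metric space X the following are equivalent: (1) f is dw-expansive with central dimension D = 0; (2) f is partially expansive with central dimension D = 0; (3) f is cw-expansive. -/

import Mathlib

open Metric Set

variable {X : Type*} [MetricSpace X]

/-- mesh of a family of sets is < ε -/
def MeshLT (𝒰 : Set (Set X)) (ε : ℝ) : Prop := ∀ A ∈ 𝒰, Metric.diam A < ε

/-- the order of a family of sets is ≤ n : every subfamily with more than n+1
elements has empty intersection -/
def OrdLE (𝒰 : Set (Set X)) (n : ℕ) : Prop :=
  ∀ 𝒱 : Finset (Set X), ↑𝒱 ⊆ 𝒰 → n + 1 < 𝒱.card → ⋂₀ (𝒱 : Set (Set X)) = ∅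

/-- the ε-dimension of Y is ≤ n -/
def DimEpsLE (Y : Set X) (ε : ℝ) (n : ℕ) : Prop :=
  ∃ 𝒰 : Set (Set X), (∀ A ∈ 𝒰, IsOpen A) ∧ Y ⊆ ⋃₀ 𝒰 ∧ MeshLT 𝒰 ε ∧ OrdLE 𝒰 n

/-- the ε-dimension of Y, as an extended natural number -/
noncomputable def dimEps (Y : Set X) (ε : ℝ) : ℕ∞ :=
  sInf {d : ℕ∞ | ∃ n : ℕ, d = n ∧ DimEpsLE Y ε n}

/-- the topological (covering) dimension of Y, as lim_{ε→0} dim_ε Y -/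
noncomputable def topDim (Y : Set X) : ℕ∞ :=
  ⨆ (ε : ℝ) (_ : 0 < ε), dimEps Y ε

/-- dim Y > D, for an integer D ≥ -1 (nonempty sets have dimension ≥ 0 > -1) -/
def DimGT (Y : Set X) (D : ℤ) : Prop := D < 0 ∨ ((D.toNat : ℕ∞) < topDim Y)

/-- the n-th iterate (n ∈ ℤ) of a homeomorphism -/
def hiter (f : X ≃ₜ X) (n : ℤ) : X → X := ⇑(f.toEquiv ^ n)

/-- partially expansive with central dimension D and expansive constant ε -/
def PartiallyExpansive (f : X ≃ₜ X) (D : ℤ) (ε : ℝ) : Prop :=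
  ∀ C : Set X, IsCompact C → C.Nontrivial → DimGT C D →
    ∃ k : ℤ, ε ≤ Metric.diam (hiter f k '' C)
/-- f is dw-expansive with central dimension D and dw-expansive constant σ -/
def DwExpansive {X : Type*} [MetricSpace X] (f : X ≃ₜ X) (D : ℕ) (σ : ℝ) : Prop :=
  ∀ C : Set X, IsCompact C → (D : ℕ∞) < topDim C →
    ∃ n : ℤ, (D : ℕ∞) < dimEps (hiter f n '' C) σ

/-- f is continuum-wise expansive with cw-expansive constant δ -/
def CwExpansiveWith {X : Type*} [MetricSpace X] (f : X ≃ₜ X) (δ : ℝ) : Prop :=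
  ∀ C : Set X, IsCompact C → IsConnected C →
    (∀ n : ℤ, Metric.diam (hiter f n '' C) < δ) → ∃ x : X, C = {x}

section AuxLemmas

lemma hiter_continuous (f : X ≃ₜ X) (n : ℤ) : Continuous (hiter f n) := by
  induction n using Int.induction_on with
  | zero => simpa [hiter] using continuous_id
  | succ n ih =>
      have h : hiter f (n + 1) = hiter f n ∘ ⇑f := by
        ext x
        simp [hiter, zpow_add_one, Equiv.Perm.coe_mul, Function.comp]
      rw [h]; exact ih.comp f.continuous
  | pred n ih =>
      have h : hiter f (-n - 1) = hiter f (-n) ∘ ⇑f.symm := by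
        ext x
        simp [hiter, zpow_sub_one, Equiv.Perm.coe_mul, Function.comp]
      rw [h]; exact ih.comp f.symm.continuous

lemma bddAll [CompactSpace X] (s : Set X) : Bornology.IsBounded s :=
  (isCompact_univ.isBounded).subset (Set.subset_univ s)

lemma dimEps_eq_zero {Y : Set X} {ε : ℝ} (h : DimEpsLE Y ε 0) : dimEps Y ε = 0 :=
  le_antisymm (sInf_le ⟨0, by simp, h⟩) (zero_le)

lemma pos_dimEps {Y : Set X} {ε : ℝ} (h : ¬ DimEpsLE Y ε 0) : 0 < dimEps Y ε := by
  have h1 : (1 : ℕ∞) ≤ dimEps Y ε := by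
    apply le_sInf
    rintro d ⟨n, rfl, hn⟩
    rcases Nat.eq_zero_or_pos n with rfl | hpos
    · exact absurd hn h
    · exact_mod_cast hpos
  exact lt_of_lt_of_le (by norm_num) h1

lemma dimEpsLE_of_diam_lt [CompactSpace X] {Y : Set X} {ε : ℝ}
    (h : Metric.diam Y < ε) : DimEpsLE Y ε 0 := by
  have hd : 0 ≤ Metric.diam Y := Metric.diam_nonneg
  have hr0 : 0 < (ε - Metric.diam Y) / 4 := by linarith
  set r : ℝ := (ε - Metric.diam Y) / 4 with hrdef
  refine ⟨{Metric.thickening r Y}, ?_, ?_, ?_, ?_⟩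
  · rintro A hA
    rw [Set.mem_singleton_iff] at hA
    rw [hA]; exact Metric.isOpen_thickening
  · rw [Set.sUnion_singleton]; exact Metric.self_subset_thickening hr0 Y
  · rintro A hA
    rw [Set.mem_singleton_iff] at hA
    subst hA
    have h1 := Metric.diam_mono (Metric.thickening_subset_cthickening r Y) (bddAll _)
    have h2 := Metric.diam_cthickening_le Y hr0.le
    linarith
  · intro 𝒱 hsub hcard
    exfalso
    obtain ⟨A, hA, B, hB, hAB⟩ := Finset.one_lt_card.mp (by omega : 1 < 𝒱.card)
    have h1 := hsub hA
    have h2 := hsub hB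
    rw [Set.mem_singleton_iff] at h1 h2
    exact hAB (h1.trans h2.symm)

lemma connected_subset_mem {S : Set X} {𝒰 : Set (Set X)} (hne : S.Nonempty)
    (hconn : IsPreconnected S) (hopen : ∀ A ∈ 𝒰, IsOpen A) (hcov : S ⊆ ⋃₀ 𝒰)
    (hord : OrdLE 𝒰 0) : ∃ A ∈ 𝒰, S ⊆ A := by
  classical
  obtain ⟨x, hx⟩ := hne
  obtain ⟨A, hA, hxA⟩ := hcov hx
  have hdisj : Disjoint A (⋃₀ (𝒰 \ {A})) := by
    rw [Set.disjoint_sUnion_right]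
    rintro M ⟨hM, hMA⟩
    rw [Set.mem_singleton_iff] at hMA
    rw [Set.disjoint_iff_inter_eq_empty]
    have h2 := hord {A, M} ?_ ?_
    · rwa [Finset.coe_insert, Finset.coe_singleton, Set.sInter_insert,
        Set.sInter_singleton] at h2
    · intro B hB
      rcases Finset.mem_insert.mp hB with rfl | hB
      · exact hA
      · rw [Finset.mem_singleton] at hB; subst hB; exact hM
    · rw [Finset.card_pair (Ne.symm hMA)]; omega
  have hAB : S ⊆ A ∪ ⋃₀ (𝒰 \ {A}) := by
    intro y hy
    rcases hcov hy with ⟨B, hB, hyB⟩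
    by_cases hBA : B = A
    · exact Or.inl (hBA ▸ hyB)
    · exact Or.inr ⟨B, ⟨hB, hBA⟩, hyB⟩
  have hBopen : IsOpen (⋃₀ (𝒰 \ {A})) := isOpen_sUnion fun M hM => hopen M hM.1
  rcases hconn.subset_or_subset (hopen A hA) hBopen hdisj hAB with h | h
  · exact ⟨A, hA, h⟩
  · exact absurd (h hx) (Set.disjoint_left.mp hdisj hxA)

lemma not_dimEpsLE_of_continuum [CompactSpace X] {Y S : Set X} (hSY : S ⊆ Y)
    (hne : S.Nonempty) (hconn : IsPreconnected S) {ε : ℝ} (hε : ε ≤ Metric.diam S) :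
    ¬ DimEpsLE Y ε 0 := by
  rintro ⟨𝒰, hopen, hcov, hmesh, hord⟩
  obtain ⟨A, hA, hSA⟩ := connected_subset_mem hne hconn hopen (hSY.trans hcov) hord
  have h1 : Metric.diam S ≤ Metric.diam A := Metric.diam_mono hSA (bddAll A)
  linarith [hmesh A hA]

lemma topDim_pos [CompactSpace X] {C : Set X} (hnt : C.Nontrivial)
    (hconn : IsPreconnected C) : 0 < topDim C := by
  obtain ⟨x, hx, y, hy, hxy⟩ := hnt
  have hdp : 0 < Metric.diam C :=
    lt_of_lt_of_le (dist_pos.mpr hxy) (Metric.dist_le_diam_of_mem (bddAll C) hx hy)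
  have h1 : 0 < dimEps C (Metric.diam C) :=
    pos_dimEps (not_dimEpsLE_of_continuum (subset_refl C) ⟨x, hx⟩ hconn le_rfl)
  rw [topDim, lt_iSup_iff]
  exact ⟨Metric.diam C, by rwa [iSup_pos hdp]⟩

lemma exists_continuum [CompactSpace X] {C : Set X} (hC : IsCompact C)
    (hd : 0 < topDim C) :
    ∃ K, K ⊆ C ∧ IsCompact K ∧ IsPreconnected K ∧ K.Nontrivial := by
  classical
  by_contra hcon
  push_neg at hcon
  haveI : CompactSpace ↥C := isCompact_iff_compactSpace.mp hC
  haveI : TotallyDisconnectedSpace ↥C := by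
    refine ⟨fun t _ ht => ?_⟩
    intro a ha b hb
    have himg : IsPreconnected (Subtype.val '' t) :=
      ht.image _ continuous_subtype_val.continuousOn
    have hcl : IsPreconnected (closure (Subtype.val '' t)) := himg.closure
    have hclC : closure (Subtype.val '' t) ⊆ C := by
      refine closure_minimal ?_ hC.isClosed
      rintro _ ⟨z, _, rfl⟩; exact z.2
    have hcpt : IsCompact (closure (Subtype.val '' t)) := isClosed_closure.isCompact
    have hsub : (closure (Subtype.val '' t)).Subsingleton := by
      rw [← Set.not_nontrivial_iff]
      exact Set.not_nontrivial_iff.mpr (hcon _ hclC hcpt hcl)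
    have hab : (a : X) = b :=
      hsub (subset_closure ⟨a, ha, rfl⟩) (subset_closure ⟨b, hb, rfl⟩)
    exact Subtype.ext hab
  have hle : ∀ ε : ℝ, 0 < ε → DimEpsLE C ε 0 := by
    intro ε hε
    by_cases hCe : C = ∅
    · refine ⟨∅, by simp, by simp [hCe], by simp [MeshLT], ?_⟩
      intro 𝒱 hs hcard
      exfalso
      have h0 : 𝒱 = ∅ := Finset.coe_eq_empty.mp (Set.subset_empty_iff.mp hs)
      rw [h0] at hcard
      simp at hcard
    obtain ⟨x0, hx0⟩ := Set.nonempty_iff_ne_empty.mpr hCe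
    have hpiece : ∀ x : ↥C, ∃ W : Set X, IsOpen W ∧ (x : X) ∈ W ∧
        IsCompact (C ∩ W) ∧ C ∩ W ⊆ Metric.ball (x : X) (ε / 8) := by
      intro x
      have hU : IsOpen ((Subtype.val : ↥C → X) ⁻¹' Metric.ball (x : X) (ε / 8)) :=
        Metric.isOpen_ball.preimage continuous_subtype_val
      have hxU : x ∈ (Subtype.val : ↥C → X) ⁻¹' Metric.ball (x : X) (ε / 8) :=
        Metric.mem_ball_self (by positivity)
      obtain ⟨V, hVclopen, hxV, hVsub⟩ := compact_exists_isClopen_in_isOpen hU hxU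
      obtain ⟨W, hWopen, hWpre⟩ := isOpen_induced_iff.mp hVclopen.isOpen
      have himg : Subtype.val '' V = C ∩ W := by
        rw [← hWpre, Subtype.image_preimage_coe]
      refine ⟨W, hWopen, ?_, ?_, ?_⟩
      · have hx' := hxV; rw [← hWpre] at hx'; exact hx'
      · rw [← himg]
        exact (hVclopen.isClosed.isCompact).image continuous_subtype_val
      · rw [← himg]
        rintro _ ⟨z, hz, rfl⟩
        exact hVsub hz
    choose W hWopen hmemW hWcpt hWball using hpiece
    have hcovC : C ⊆ ⋃ x : ↥C, W x := fun y hy => Set.mem_iUnion.mpr ⟨⟨y, hy⟩, hmemW _⟩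
    obtain ⟨t, ht⟩ := hC.elim_finite_subcover W hWopen hcovC
    have htne : t.Nonempty := by
      rcases Set.mem_iUnion₂.mp (ht hx0) with ⟨i, hi, _⟩; exact ⟨i, hi⟩
    set l := t.toList with hl
    set n := l.length with hn
    have hn0 : 0 < n := by
      rw [hn, hl, Finset.length_toList]; exact Finset.card_pos.mpr htne
    set Li : Fin n → Set X := fun i =>
      (C ∩ W (l.get i)) \ ⋃ j : Fin n, ⋃ _ : (j : ℕ) < (i : ℕ), W (l.get j) with hLi
    have hLicpt : ∀ i, IsCompact (Li i) := fun i =>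
      (hWcpt _).diff (isOpen_iUnion fun j => isOpen_iUnion fun _ => hWopen _)
    have hLisubW : ∀ i, Li i ⊆ W (l.get i) := fun i =>
      Set.diff_subset.trans Set.inter_subset_right
    have key : ∀ i j : Fin n, (i : ℕ) < (j : ℕ) → Disjoint (Li i) (Li j) := by
      intro i j hij
      rw [Set.disjoint_left]
      intro y hyi hyj
      exact hyj.2 (Set.mem_iUnion.mpr ⟨i, Set.mem_iUnion.mpr ⟨hij, hLisubW i hyi⟩⟩)
    have hLidisj : ∀ i j : Fin n, i ≠ j → Disjoint (Li i) (Li j) := by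
      intro i j hij
      rcases lt_trichotomy (i : ℕ) (j : ℕ) with h | h | h
      · exact key i j h
      · exact absurd (Fin.ext h) hij
      · exact (key j i h).symm
    have hLicov : C ⊆ ⋃ i, Li i := by
      intro y hy
      have hex : ∃ m, ∃ hm : m < n, y ∈ W (l.get ⟨m, hm⟩) := by
        rcases Set.mem_iUnion₂.mp (ht hy) with ⟨x, hxt, hyW⟩
        rcases List.mem_iff_get.mp (Finset.mem_toList.mpr hxt) with ⟨i, rfl⟩
        exact ⟨i.1, i.2, hyW⟩
      obtain ⟨hm, hym⟩ := Nat.find_spec hex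
      refine Set.mem_iUnion.mpr ⟨⟨Nat.find hex, hm⟩, ⟨⟨hy, hym⟩, ?_⟩⟩
      intro hmem
      rcases Set.mem_iUnion.mp hmem with ⟨j, hj⟩
      rcases Set.mem_iUnion.mp hj with ⟨hjm, hyWj⟩
      exact absurd ⟨j.2, hyWj⟩ (Nat.find_min hex hjm)
    have hLidiam : ∀ i, Metric.diam (Li i) ≤ ε / 4 := by
      intro i
      have h1 : Li i ⊆ Metric.ball ((l.get i : ↥C) : X) (ε / 8) :=
        fun y hy => hWball _ ⟨hy.1.1, hLisubW i hy⟩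
      calc Metric.diam (Li i) ≤ Metric.diam (Metric.ball ((l.get i : ↥C) : X) (ε / 8)) :=
            Metric.diam_mono h1 (bddAll _)
        _ ≤ 2 * (ε / 8) := Metric.diam_ball (by positivity)
        _ = ε / 4 := by ring
    have hrex : ∀ p : Fin n × Fin n, ∃ r : ℝ, 0 < r ∧ (p.1 ≠ p.2 →
        Disjoint (Metric.thickening r (Li p.1)) (Metric.thickening r (Li p.2))) := by
      intro p
      by_cases hp : p.1 = p.2
      · exact ⟨1, one_pos, fun h => absurd hp h⟩
      · obtain ⟨r, hr0, hrd⟩ :=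
          (hLidisj _ _ hp).exists_thickenings (hLicpt _) (hLicpt _).isClosed
        exact ⟨r, hr0, fun _ => hrd⟩
    choose rr hrr0 hrrd using hrex
    have hune : (Finset.univ : Finset (Fin n × Fin n)).Nonempty :=
      ⟨(⟨0, hn0⟩, ⟨0, hn0⟩), Finset.mem_univ _⟩
    set r0 : ℝ := min (ε / 8) (Finset.univ.inf' hune rr) with hr0def
    have hr0pos : 0 < r0 :=
      lt_min (by positivity) ((Finset.lt_inf'_iff hune).mpr fun p _ => hrr0 p)
    set U : Fin n → Set X := fun i => Metric.thickening r0 (Li i) with hUdef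
    have hUdisj : ∀ i j, i ≠ j → Disjoint (U i) (U j) := by
      intro i j hij
      have hle' : r0 ≤ rr (i, j) :=
        (min_le_right _ _).trans (Finset.inf'_le _ (Finset.mem_univ _))
      exact Disjoint.mono (Metric.thickening_mono hle' _)
        (Metric.thickening_mono hle' _) (hrrd (i, j) hij)
    have hUdiam : ∀ i, Metric.diam (U i) < ε := by
      intro i
      have h3 := Metric.diam_mono
        ((Metric.thickening_subset_cthickening r0 (Li i))) (bddAll _)
      have h2 := Metric.diam_cthickening_le (Li i) hr0pos.le
      have h4 : r0 ≤ ε / 8 := min_le_left _ _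
      have h5 := hLidiam i
      have h6 : Metric.diam (U i) ≤ Metric.diam (Metric.cthickening r0 (Li i)) := h3
      linarith
    refine ⟨Set.range U, ?_, ?_, ?_, ?_⟩
    · rintro A ⟨i, rfl⟩; exact Metric.isOpen_thickening
    · intro y hy
      rcases Set.mem_iUnion.mp (hLicov hy) with ⟨i, hi⟩
      exact ⟨U i, ⟨i, rfl⟩, Metric.self_subset_thickening hr0pos _ hi⟩
    · rintro A ⟨i, rfl⟩; exact hUdiam i
    · intro 𝒱 hsub hcard
      rw [Set.eq_empty_iff_forall_notMem]
      intro y hy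
      rw [Set.mem_sInter] at hy
      obtain ⟨A, hA, B, hB, hAB⟩ := Finset.one_lt_card.mp (by omega : 1 < 𝒱.card)
      obtain ⟨i, rfl⟩ := hsub hA
      obtain ⟨j, rfl⟩ := hsub hB
      have hij : i ≠ j := fun h => hAB (by rw [h])
      exact Set.disjoint_left.mp (hUdisj i j hij)
        (hy _ (Finset.mem_coe.mpr hA)) (hy _ (Finset.mem_coe.mpr hB))
  have hzero : topDim C ≤ 0 := by
    rw [topDim]
    refine iSup_le fun ε => iSup_le fun hε => ?_
    rw [dimEps_eq_zero (hle ε hε)]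
  exact hd.not_ge hzero

lemma imp12 [CompactSpace X] (f : X ≃ₜ X) :
    (∃ σ : ℝ, 0 < σ ∧ DwExpansive f 0 σ) → (∃ ε : ℝ, 0 < ε ∧ PartiallyExpansive f 0 ε) := by
  rintro ⟨σ, hσ, hdw⟩
  refine ⟨σ, hσ, ?_⟩
  intro C hC hCnt hDim
  have hDim' : (0 : ℕ∞) < topDim C := by
    rcases hDim with h | h
    · exact absurd h (lt_irrefl 0)
    · simpa using h
  obtain ⟨m, hm⟩ := hdw C hC (by simpa using hDim')
  refine ⟨m, ?_⟩
  by_contra hlt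
  push_neg at hlt
  have := dimEps_eq_zero (dimEpsLE_of_diam_lt hlt)
  rw [this] at hm
  simp at hm

lemma imp23 [CompactSpace X] (f : X ≃ₜ X) :
    (∃ ε : ℝ, 0 < ε ∧ PartiallyExpansive f 0 ε) → (∃ δ : ℝ, 0 < δ ∧ CwExpansiveWith f δ) := by
  rintro ⟨ε, hε, hpe⟩
  refine ⟨ε, hε, ?_⟩
  intro C hC hconn hsmall
  by_contra hns
  have hnt : C.Nontrivial := by
    rw [← Set.not_subsingleton_iff]
    intro hss
    obtain ⟨x, hx⟩ := hconn.nonempty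
    exact hns ⟨x, hss.eq_singleton_of_mem hx⟩
  have hdim : DimGT C 0 := Or.inr (by simpa using topDim_pos hnt hconn.isPreconnected)
  obtain ⟨k, hk⟩ := hpe C hC hnt hdim
  exact absurd (hsmall k) (not_lt.mpr hk)

lemma imp31 [CompactSpace X] (f : X ≃ₜ X) :
    (∃ δ : ℝ, 0 < δ ∧ CwExpansiveWith f δ) → (∃ σ : ℝ, 0 < σ ∧ DwExpansive f 0 σ) := by
  rintro ⟨δ, hδ, hcw⟩
  refine ⟨δ, hδ, ?_⟩
  intro C hC hdim
  obtain ⟨K, hKC, hKcpt, hKconn, hKnt⟩ := exists_continuum hC (by simpa using hdim)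
  have hKne : K.Nonempty := hKnt.nonempty
  have hbig : ¬ ∀ m : ℤ, Metric.diam (hiter f m '' K) < δ := by
    intro hall
    obtain ⟨x, hx⟩ := hcw K hKcpt ⟨hKne, hKconn⟩ hall
    obtain ⟨a, ha, b, hb, hab⟩ := hKnt
    rw [hx, Set.mem_singleton_iff] at ha hb
    exact hab (ha.trans hb.symm)
  push_neg at hbig
  obtain ⟨m, hm⟩ := hbig
  refine ⟨m, ?_⟩
  have himg : hiter f m '' K ⊆ hiter f m '' C := Set.image_mono hKC
  have hne2 : (hiter f m '' K).Nonempty := hKne.image _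
  have hconn2 : IsPreconnected (hiter f m '' K) :=
    hKconn.image _ (hiter_continuous f m).continuousOn
  simpa using pos_dimEps (not_dimEpsLE_of_continuum himg hne2 hconn2 hm)

end AuxLemmas

/-- Equivalence of dw-expansivity with central dimension 0, partial expansivity
with central dimension 0, and cw-expansivity. -/
theorem dwExpansive_iff_partiallyExpansive_iff_cwExpansive {X : Type*}
    [MetricSpace X] [CompactSpace X] (f : X ≃ₜ X) :
    ((∃ σ : ℝ, 0 < σ ∧ DwExpansive f 0 σ) ↔
        (∃ ε : ℝ, 0 < ε ∧ PartiallyExpansive f 0 ε)) ∧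
      ((∃ ε : ℝ, 0 < ε ∧ PartiallyExpansive f 0 ε) ↔
        (∃ δ : ℝ, 0 < δ ∧ CwExpansiveWith f δ)) := by
  exact ⟨⟨imp12 f, fun h => imp31 f (imp23 f h)⟩,
    ⟨imp23 f, fun h => imp12 f (imp31 f h)⟩⟩
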